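/- For all integers n ≥ 0 and m ≥ 0, the determinant of the n×n matrix with entries binom(i+j+m, i-j+m) (equal to binom(i+j+m, 2j), which vanishes when j > i+m), 0 ≤ i, j ≤ n-1, equals both the product ∏_{j=1}^{n-1} ( j!·(2m+2j)! ) / ( (2j)!·(2m+j)! ) and the m×m Hankel determinant det(C_{n+i+j})_{i,j=0}^{m-1} of shifted Catalan numbers. -/

import Mathlib

open Matrix Finset

namespace Stmt12

/-- The determinant telescoping engine: clearing the first column by row operations. -/
lemma det_step (N : ℕ) (f g : ℕ → ℕ → ℚ) (α β γ : ℕ → ℚ)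
    (hcol : ∀ i, i < N → f (i+1) 0 = α (i+1) * f i 0)
    (hrow : ∀ i j, i < N → j < N →
      f (i+1) (j+1) - α (i+1) * f i (j+1) = β (i+1) * (γ (j+1) * g i j)) :
    (Matrix.of fun i j : Fin (N+1) => f (i:ℕ) (j:ℕ)).det
      = f 0 0 * (∏ i ∈ range N, β (i+1)) * (∏ j ∈ range N, γ (j+1))
        * (Matrix.of fun i j : Fin N => g (i:ℕ) (j:ℕ)).det := by
  set G : Matrix (Fin N) (Fin N) ℚ := Matrix.of fun i j : Fin N => g (i:ℕ) (j:ℕ) with hG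
  set B : Matrix (Fin (N+1)) (Fin (N+1)) ℚ :=
    Matrix.of (fun i j : Fin (N+1) =>
      if (i:ℕ) = 0 then f 0 (j:ℕ) else f (i:ℕ) (j:ℕ) - α (i:ℕ) * f ((i:ℕ)-1) (j:ℕ)) with hB
  have hAB : (Matrix.of fun i j : Fin (N+1) => f (i:ℕ) (j:ℕ)).det = B.det := by
    apply det_eq_of_forall_row_eq_smul_add_pred (fun i : Fin N => α ((i:ℕ)+1))
    · intro j; simp [hB]
    · intro i j
      have h1 : ((i.succ : Fin (N+1)) : ℕ) = (i:ℕ)+1 := rfl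
      have h2 : ((Fin.castSucc i : Fin (N+1)) : ℕ) = (i:ℕ) := rfl
      simp only [hB, Matrix.of_apply, h1, h2, Nat.succ_ne_zero, if_false, Nat.add_sub_cancel]
      ring
  rw [hAB]
  have hB0 : ∀ i : Fin (N+1), (i:ℕ) ≠ 0 → B i 0 = 0 := by
    intro i hi
    obtain ⟨k, hk⟩ : ∃ k, (i:ℕ) = k+1 := ⟨(i:ℕ)-1, by omega⟩
    have hkN : k < N := by have := i.isLt; omega
    simp only [hB, Matrix.of_apply, hk, Nat.succ_ne_zero, if_false, Nat.add_sub_cancel,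
      Fin.val_zero]
    rw [hcol k hkN]; ring
  have hdet : B.det = B 0 0 * (B.submatrix Fin.succ Fin.succ).det := by
    rw [det_succ_column_zero, Finset.sum_eq_single (0 : Fin (N+1))]
    · simp
    · intro i _ hi
      have hi' : (i:ℕ) ≠ 0 := fun h => hi (Fin.ext (by simp [h]))
      rw [hB0 i hi']; ring
    · simp
  rw [hdet]
  have hB00 : B 0 0 = f 0 0 := by simp [hB]
  have hsub : B.submatrix Fin.succ Fin.succ
      = Matrix.of (fun i j : Fin N => β ((i:ℕ)+1) * (γ ((j:ℕ)+1) * G i j)) := by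
    ext i j
    have h1 : ((i.succ : Fin (N+1)) : ℕ) = (i:ℕ)+1 := rfl
    simp only [Matrix.submatrix_apply, hB, hG, Matrix.of_apply, h1, Nat.succ_ne_zero, if_false,
      Nat.add_sub_cancel, Fin.val_succ]
    exact hrow i j i.isLt j.isLt
  have e1 : (Matrix.of (fun i j : Fin N => β ((i:ℕ)+1) * (γ ((j:ℕ)+1) * G i j))).det
      = (∏ i ∈ range N, β (i+1)) * ((∏ j ∈ range N, γ (j+1)) * G.det) := by
    erw [Matrix.det_mul_column]
    have e2 : (fun i j : Fin N => γ ((j:ℕ)+1) * G i j)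
        = Matrix.of (fun i j : Fin N => γ ((j:ℕ)+1) * G i j) := rfl
    rw [e2, Matrix.det_mul_row, Fin.prod_univ_eq_prod_range (fun i => β (i+1)) N,
      Fin.prod_univ_eq_prod_range (fun j => γ (j+1)) N]
  rw [hsub, e1, hB00]
  ring



lemma pascalQ (a k : ℕ) : (((a+1).choose (k+1) : ℕ) : ℚ) = (a.choose k : ℚ) + (a.choose (k+1) : ℚ) := by
  rw [Nat.choose_succ_succ]; push_cast; ring

lemma chooseQ (a k : ℕ) : ((k+1 : ℕ) : ℚ) * (a.choose (k+1) : ℚ)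
    = ((a:ℚ) - (k:ℚ)) * (a.choose k : ℚ) := by
  rcases le_or_gt k a with h | h
  · have := Nat.choose_succ_right_eq a k
    have hc : ((a.choose (k+1) * (k+1) : ℕ) : ℚ) = ((a.choose k * (a - k) : ℕ) : ℚ) := by
      exact_mod_cast congrArg (Nat.cast (R := ℚ)) this
    push_cast [Nat.cast_sub h] at hc ⊢
    linear_combination hc
  · rw [Nat.choose_eq_zero_of_lt h, Nat.choose_eq_zero_of_lt (by omega)]
    simp

-- (x+1) * C(x+s+1, s) = (x+s+1) * C(x+s, s)
lemma nat1 (x s : ℕ) : (x+1) * Nat.choose (x+s+1) s = (x+s+1) * Nat.choose (x+s) s := by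
  have h1 : (x+s+1) * Nat.choose (x+s) s = Nat.choose (x+s+1) (s+1) * (s+1) := by
    simpa [Nat.succ_eq_add_one] using Nat.add_one_mul_choose_eq (x+s) s
  have h2 := Nat.choose_succ_right_eq (x+s+1) s
  have h3 : x + s + 1 - s = x + 1 := by omega
  rw [h3] at h2
  rw [h1, h2]
  ring

-- key identity (N1): p*(2q+s)*C(p+q+s, 2q+s) = (p+s)*(2q+s)*C(p+q+s-1, 2q+s) + (2p+s)*q*C(p+q+s-1, 2q+s-1)
-- formulated with p = i+d+1, q = j+1 to avoid subtraction
lemma keybinom (i j s d : ℕ) :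
    ((i+d+1 : ℕ):ℚ) * ((2*j+s+2 : ℕ):ℚ) * ((i+j+s+d+2).choose (2*j+s+2) : ℚ)
      = ((i+d+s+1 : ℕ):ℚ) * ((2*j+s+2 : ℕ):ℚ) * ((i+j+s+d+1).choose (2*j+s+2) : ℚ)
        + ((2*i+2*d+s+2 : ℕ):ℚ) * ((j+1 : ℕ):ℚ) * ((i+j+s+d+1).choose (2*j+s+1) : ℚ) := by
  have hp : (i+j+s+d+2) = (i+j+s+d+1) + 1 := by omega
  rw [hp]
  have hpas := pascalQ (i+j+s+d+1) (2*j+s+1)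
  have hch := chooseQ (i+j+s+d+1) (2*j+s+1)
  have e1 : 2*j+s+1+1 = 2*j+s+2 := by omega
  rw [e1] at hpas hch
  push_cast at hpas hch ⊢
  linear_combination ((i:ℚ)+d+1) * (2*(j:ℚ)+s+2) * hpas - (s:ℚ) * hch



def F (d s i j : ℕ) : ℚ := ((i+j+s+d).choose (2*j+s) : ℚ)

noncomputable def r1 (d s k : ℕ) : ℚ :=
  ((s+d+k).factorial : ℚ) * ((2*d+s+2*k).factorial : ℚ) * ((k).factorial : ℚ)
    / (((2*d+s+k).factorial : ℚ) * ((2*k+s).factorial : ℚ) * ((d+k).factorial : ℚ))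

lemma fq_ne (x : ℕ) : ((x.factorial : ℕ) : ℚ) ≠ 0 := Nat.cast_ne_zero.2 (Nat.factorial_ne_zero x)

lemma PI1s (d s N : ℕ) : r1 d s (N+1)
    = ((2*(N+1)+2*d+s : ℕ):ℚ)/((N+1+d : ℕ):ℚ) * (((N+1 : ℕ):ℚ)/((2*(N+1)+s : ℕ):ℚ))
      * r1 d (s+1) N := by
  unfold r1
  have L1 : s+d+(N+1) = s+1+d+N := by omega
  have L2 : 2*d+s+2*(N+1) = (2*d+(s+1)+2*N) + 1 := by omega
  have L4 : 2*d+s+(N+1) = 2*d+(s+1)+N := by omega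
  have L5 : 2*(N+1)+s = (2*N+(s+1)) + 1 := by omega
  have L6 : d+(N+1) = (d+N)+1 := by omega
  rw [L1, L2, L4, L5, L6, Nat.factorial_succ (2*d+(s+1)+2*N), Nat.factorial_succ (2*N+(s+1)),
    Nat.factorial_succ (d+N), Nat.factorial_succ N]
  have h1 : ((N+1+d : ℕ):ℚ) ≠ 0 := Nat.cast_ne_zero.2 (by omega)
  have h2 : ((2*(N+1)+s : ℕ):ℚ) ≠ 0 := Nat.cast_ne_zero.2 (by omega)
  rw [L5] at h2
  field_simp
  push_cast
  ring

lemma PI1 (d s N : ℕ) :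
    ((s+d).choose s : ℚ) * (∏ i ∈ range N, ((2*(i+1)+2*d+s : ℕ) : ℚ) / ((i+1+d : ℕ) : ℚ))
      * (∏ j ∈ range N, ((j+1 : ℕ) : ℚ) / ((2*(j+1)+s : ℕ) : ℚ))
      * (∏ k ∈ range N, r1 d (s+1) k)
    = ∏ k ∈ range (N+1), r1 d s k := by
  induction N with
  | zero =>
    simp only [range_zero, prod_empty, mul_one, zero_add, prod_range_one]
    rw [Nat.cast_choose ℚ (show s ≤ s+d by omega)]
    unfold r1
    have e6 : s+d-s = d := by omega
    simp only [Nat.mul_zero, Nat.add_zero, Nat.zero_add, Nat.factorial_zero, e6]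
    field_simp
    ring
  | succ N ih =>
    rw [prod_range_succ, prod_range_succ, prod_range_succ (fun k => r1 d (s+1) k),
      prod_range_succ (fun k => r1 d s k)]
    rw [PI1s d s N]
    linear_combination (((2*(N+1)+2*d+s : ℕ):ℚ)/((N+1+d : ℕ):ℚ)
      * (((N+1 : ℕ):ℚ)/((2*(N+1)+s : ℕ):ℚ)) * r1 d (s+1) N) * ih



lemma claim1 (d n : ℕ) : ∀ s,
    (Matrix.of fun i j : Fin n => F d s (i:ℕ) (j:ℕ)).det = ∏ k ∈ range n, r1 d s k := by
  induction n with
  | zero => intro s; simp [Matrix.det_fin_zero]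
  | succ N ih =>
    intro s
    rw [det_step N (F d s) (F d (s+1))
      (fun i => ((i+s+d : ℕ):ℚ)/((i+d : ℕ):ℚ))
      (fun i => ((2*i+2*d+s : ℕ):ℚ)/((i+d : ℕ):ℚ))
      (fun j => ((j : ℕ):ℚ)/((2*j+s : ℕ):ℚ))
      ?hcol ?hrow]
    case hcol =>
      intro i hi
      have hn := nat1 (i+d) s
      have hq : (((i+d+1) * Nat.choose (i+d+s+1) s : ℕ):ℚ)
          = (((i+d+s+1) * Nat.choose (i+d+s) s : ℕ):ℚ) := by exact_mod_cast hn
      unfold F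
      have e1 : i+1+0+s+d = i+d+s+1 := by omega
      have e2 : i+0+s+d = i+d+s := by omega
      have e3 : 2*0+s = s := by omega
      rw [e1, e3, e2]
      rw [div_mul_eq_mul_div, eq_div_iff (Nat.cast_ne_zero.2 (show i+1+d ≠ 0 by omega))]
      push_cast at hq ⊢
      linear_combination hq
    case hrow =>
      intro i j hi hj
      unfold F
      have e1 : i+1+(j+1)+s+d = i+j+s+d+2 := by omega
      have e2 : 2*(j+1)+s = 2*j+s+2 := by omega
      have e3 : i+(j+1)+s+d = i+j+s+d+1 := by omega
      have e4 : i+j+(s+1)+d = i+j+s+d+1 := by omega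
      have e5 : 2*j+(s+1) = 2*j+s+1 := by omega
      rw [e1, e2, e3, e4, e5]
      have key := keybinom i j s d
      have hne1 : ((i+1+d : ℕ):ℚ) ≠ 0 := Nat.cast_ne_zero.2 (by omega)
      have hne2 : ((2*(j+1)+s : ℕ):ℚ) ≠ 0 := Nat.cast_ne_zero.2 (by omega)
      field_simp
      push_cast at key ⊢
      linear_combination key
    · rw [ih (s+1)]
      have hpi := PI1 d s N
      have hF00 : F d s 0 0 = ((s+d).choose s : ℚ) := by
        unfold F; simp only [Nat.zero_add, Nat.mul_zero]
      rw [hF00]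
      rw [← hpi]




noncomputable def KQ (s u : ℕ) : ℚ :=
  ((2*s+1 : ℕ):ℚ) * ((2*u).factorial : ℚ) / (((u+s+1).factorial : ℚ) * ((u).factorial : ℚ))

noncomputable def KQf (s ν i j : ℕ) : ℚ := KQ s (ν+i+j)

noncomputable def rho2 (r ν s : ℕ) : ℚ :=
  ((2*s+2*r+1 : ℕ):ℚ) * ((2*ν+2*r).factorial : ℚ) * ((2*s+2*r).factorial : ℚ)
      * ((s).factorial : ℚ) * ((r).factorial : ℚ) * ((ν+s+r).factorial : ℚ)
    / (((ν+s+2*r+1).factorial : ℚ) * ((ν+r).factorial : ℚ) * ((2*s).factorial : ℚ)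
      * ((s+r).factorial : ℚ) * ((ν+s+2*r).factorial : ℚ))

lemma fq_ne' (x : ℕ) : ((x.factorial : ℕ) : ℚ) ≠ 0 := Nat.cast_ne_zero.2 (Nat.factorial_ne_zero x)

lemma PI2base (ν s : ℕ) : rho2 0 ν s = KQ s ν := by
  unfold rho2 KQ
  simp only [Nat.mul_zero, Nat.add_zero]
  field_simp
  ring

lemma PI2s (k ν s : ℕ) : rho2 (k+1) ν s
    = rho2 k (ν+1) (s+1) * ((4*(s:ℚ)+2)/((ν:ℚ)+((k+1 : ℕ):ℚ)+(s:ℚ)+1)) * ((k+1 : ℕ):ℚ) := by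
  unfold rho2
  rw [show 2*s+2*(k+1)+1 = 2*(s+1)+2*k+1 from by omega,
      show 2*ν+2*(k+1) = 2*(ν+1)+2*k from by omega,
      show 2*s+2*(k+1) = 2*(s+1)+2*k from by omega,
      Nat.factorial_succ k,
      show ν+s+(k+1) = ν+s+k+1 from by omega,
      show ν+s+2*(k+1)+1 = ν+1+(s+1)+2*k+1 from by omega,
      show ν+(k+1) = ν+1+k from by omega,
      show s+(k+1) = (s+k)+1 from by omega,
      show ν+s+2*(k+1) = ν+1+(s+1)+2*k from by omega,
      show ν+1+(s+1)+k = (ν+s+k+1)+1 from by omega,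
      Nat.factorial_succ (ν+s+k+1),
      Nat.factorial_succ s,
      show 2*(s+1) = (2*s+1)+1 from by omega,
      Nat.factorial_succ (2*s+1), Nat.factorial_succ (2*s),
      show s+1+k = (s+k)+1 from by omega,
      Nat.factorial_succ (s+k)]
  have hd : (ν:ℚ) + ((k+1 : ℕ):ℚ) + (s:ℚ) + 1 ≠ 0 := by positivity
  field_simp
  push_cast
  ring


noncomputable def wq (m k : ℕ) : ℚ :=
  ((k.factorial : ℚ) * ((2*m+2*k).factorial : ℚ)) / (((2*k).factorial : ℚ) * ((2*m+k).factorial : ℚ))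
-- hcol identity

lemma hcol2 (s ν i : ℕ) : KQf s ν (i+1) 0
    = ((4*(ν:ℚ)+4*((i+1 : ℕ):ℚ)-2)/((ν:ℚ)+((i+1 : ℕ):ℚ)+(s:ℚ)+1)) * KQf s ν i 0 := by
  unfold KQf KQ
  rw [show ν+(i+1)+0 = (ν+i)+1 from by omega, show ν+i+0 = ν+i from by omega,
      show 2*((ν+i)+1) = (2*(ν+i)+1)+1 from by omega,
      Nat.factorial_succ (2*(ν+i)+1), Nat.factorial_succ (2*(ν+i)),
      show (ν+i)+1+s+1 = ((ν+i)+s+1)+1 from by omega,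
      Nat.factorial_succ ((ν+i)+s+1),
      Nat.factorial_succ (ν+i)]
  have hd : (ν:ℚ) + ((i+1 : ℕ):ℚ) + (s:ℚ) + 1 ≠ 0 := by positivity
  field_simp
  push_cast
  ring

set_option maxHeartbeats 1000000 in
-- hrow identity
lemma hrow2 (s ν i j : ℕ) : KQf s ν (i+1) (j+1)
    - ((4*(ν:ℚ)+4*((i+1 : ℕ):ℚ)-2)/((ν:ℚ)+((i+1 : ℕ):ℚ)+(s:ℚ)+1)) * KQf s ν i (j+1)
    = ((4*(s:ℚ)+2)/((ν:ℚ)+((i+1 : ℕ):ℚ)+(s:ℚ)+1)) * (((j+1 : ℕ):ℚ) * KQf (s+1) (ν+1) i j) := by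
  unfold KQf KQ
  rw [show ν+(i+1)+(j+1) = (ν+i+j+1)+1 from by omega,
      show ν+i+(j+1) = ν+i+j+1 from by omega,
      show ν+1+i+j = ν+i+j+1 from by omega,
      show 2*((ν+i+j+1)+1) = ((2*(ν+i+j+1))+1)+1 from by omega,
      Nat.factorial_succ ((2*(ν+i+j+1))+1), Nat.factorial_succ (2*(ν+i+j+1)),
      show (ν+i+j+1)+1+s+1 = ((ν+i+j+1)+s+1)+1 from by omega,
      Nat.factorial_succ ((ν+i+j+1)+s+1),
      Nat.factorial_succ (ν+i+j+1),
      show (ν+i+j+1)+(s+1)+1 = ((ν+i+j+1)+s+1)+1 from by omega,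
      Nat.factorial_succ ((ν+i+j+1)+s+1)]
  have hd : (ν:ℚ) + ((i+1 : ℕ):ℚ) + (s:ℚ) + 1 ≠ 0 := by positivity
  field_simp
  push_cast
  ring

lemma PI2 (ν s N : ℕ) :
    KQ s ν * (∏ i ∈ range N, (4*(s:ℚ)+2)/((ν:ℚ)+((i+1 : ℕ):ℚ)+(s:ℚ)+1))
      * (∏ j ∈ range N, ((j+1 : ℕ):ℚ))
      * (∏ r ∈ range N, rho2 r (ν+1) (s+1))
    = ∏ r ∈ range (N+1), rho2 r ν s := by
  induction N with
  | zero =>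
    simp only [range_zero, prod_empty, mul_one, zero_add, prod_range_one]
    rw [PI2base]
  | succ N ih =>
    rw [prod_range_succ, prod_range_succ (fun j => ((j+1 : ℕ):ℚ)),
      prod_range_succ (fun r => rho2 r (ν+1) (s+1)), prod_range_succ (fun r => rho2 r ν s)]
    rw [PI2s N ν s]
    linear_combination (rho2 N (ν+1) (s+1) * ((4*(s:ℚ)+2)/((ν:ℚ)+((N+1 : ℕ):ℚ)+(s:ℚ)+1))
      * ((N+1 : ℕ):ℚ)) * ih

lemma catQ (u : ℕ) : ((catalan u : ℕ):ℚ) = KQ 0 u := by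
  have h := succ_mul_catalan_eq_centralBinom u
  have hc : (((u+1) * catalan u : ℕ):ℚ) = ((Nat.centralBinom u : ℕ):ℚ) := by exact_mod_cast h
  have h2 : ((Nat.centralBinom u : ℕ):ℚ) = ((2*u).factorial : ℚ) / ((u.factorial : ℚ) * (u.factorial : ℚ)) := by
    rw [Nat.centralBinom, Nat.cast_choose ℚ (by omega : u ≤ 2*u)]
    rw [show 2*u - u = u from by omega]
  unfold KQ
  rw [show u+0+1 = u+1 from by omega, Nat.factorial_succ u]
  rw [h2] at hc
  have hu : ((u:ℚ)+1) ≠ 0 := by positivity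
  field_simp at hc ⊢
  push_cast at hc ⊢
  linear_combination hc

lemma rho2_n0 (m ν : ℕ) : rho2 m ν 0
    = ((2*m+1 : ℕ):ℚ) * ((2*m).factorial : ℚ) * ((2*ν+2*m).factorial : ℚ)
      / (((ν+2*m+1).factorial : ℚ) * ((ν+2*m).factorial : ℚ)) := by
  unfold rho2
  rw [show 2*0+2*m+1 = 2*m+1 from by omega, show 2*0+2*m = 2*m from by omega,
    show ν+0+m = ν+m from by omega, show ν+0+2*m+1 = ν+2*m+1 from by omega,
    show 2*0 = 0 from by omega, show 0+m = m from by omega,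
    show ν+0+2*m = ν+2*m from by omega, Nat.factorial_zero]
  field_simp

lemma PI3base (n : ℕ) : ∏ k ∈ range n, wq 0 k = 1 := by
  apply Finset.prod_eq_one
  intro k _
  unfold wq
  rw [show 2*0+2*k = 2*k from by omega, show 2*0+k = k from by omega]
  field_simp

lemma PI3s (m : ℕ) : ∀ n, ∏ k ∈ range n, wq (m+1) k = rho2 m n 0 * ∏ k ∈ range n, wq m k := by
  intro n
  induction n with
  | zero =>
    rw [rho2_n0]
    simp only [range_zero, prod_empty, mul_one, Nat.mul_zero, Nat.zero_add,
      Nat.factorial_succ (2*m)]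
    field_simp
    norm_cast
  | succ N ih =>
    rw [prod_range_succ, prod_range_succ (fun k => wq m k), ih]
    rw [rho2_n0, rho2_n0]
    unfold wq
    rw [show 2*(m+1)+2*N = ((2*N+2*m)+1)+1 from by omega,
      show 2*(m+1)+N = ((N+2*m)+1)+1 from by omega,
      show 2*(N+1)+2*m = ((2*N+2*m)+1)+1 from by omega,
      show N+1+2*m+1 = ((N+2*m)+1)+1 from by omega,
      show N+1+2*m = (N+2*m)+1 from by omega,
      show N+2*m+1 = (N+2*m)+1 from by omega,
      show 2*m+2*N = 2*N+2*m from by omega,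
      show 2*m+N = N+2*m from by omega,
      Nat.factorial_succ ((2*N+2*m)+1), Nat.factorial_succ (2*N+2*m),
      Nat.factorial_succ ((N+2*m)+1), Nat.factorial_succ (N+2*m)]
  -- now pure field identity
    field_simp

lemma PI3 (n : ℕ) : ∀ m, ∏ r ∈ range m, rho2 r n 0 = ∏ k ∈ range n, wq m k := by
  intro m
  induction m with
  | zero => simp [PI3base]
  | succ M ih =>
    rw [prod_range_succ, ih, PI3s M n]
    ring



lemma claim2 (k : ℕ) : ∀ ν s,
    (Matrix.of fun i j : Fin k => KQf s ν (i:ℕ) (j:ℕ)).det = ∏ r ∈ range k, rho2 r ν s := by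
  induction k with
  | zero => intro ν s; simp [Matrix.det_fin_zero]
  | succ N ih =>
    intro ν s
    rw [det_step N (KQf s ν) (KQf (s+1) (ν+1))
      (fun i => (4*(ν:ℚ)+4*(i:ℚ)-2)/((ν:ℚ)+(i:ℚ)+(s:ℚ)+1))
      (fun i => (4*(s:ℚ)+2)/((ν:ℚ)+(i:ℚ)+(s:ℚ)+1))
      (fun j => (j:ℚ))
      (fun i _ => hcol2 s ν i) (fun i j _ _ => hrow2 s ν i j)]
    rw [ih (ν+1) (s+1)]
    have hK00 : KQf s ν 0 0 = KQ s ν := by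
      unfold KQf; rw [show ν+0+0 = ν from by omega]
    rw [hK00, ← PI2 ν s N]

theorem final (n m : ℕ) :
    Matrix.det (Matrix.of fun i j : Fin n =>
          (Nat.choose ((i : ℕ) + (j : ℕ) + m) (2 * (j : ℕ)) : ℚ))
        = ∏ j ∈ Finset.Icc 1 (n - 1),
            ((j.factorial : ℚ) * ((2 * m + 2 * j).factorial : ℚ)) /
              (((2 * j).factorial : ℚ) * ((2 * m + j).factorial : ℚ)) ∧
      Matrix.det (Matrix.of fun i j : Fin n =>
          (Nat.choose ((i : ℕ) + (j : ℕ) + m) (2 * (j : ℕ)) : ℚ))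
        = Matrix.det (Matrix.of fun i j : Fin m =>
            (catalan (n + (i : ℕ) + (j : ℕ)) : ℚ)) := by
  have hE : (Matrix.of fun i j : Fin n =>
        (Nat.choose ((i : ℕ) + (j : ℕ) + m) (2 * (j : ℕ)) : ℚ))
      = Matrix.of fun i j : Fin n => F m 0 (i:ℕ) (j:ℕ) := by
    ext i j
    unfold F
    norm_num
  have h1 : (Matrix.of fun i j : Fin n =>
        (Nat.choose ((i : ℕ) + (j : ℕ) + m) (2 * (j : ℕ)) : ℚ)).det
      = ∏ k ∈ range n, wq m k := by
    rw [hE, claim1 m n 0]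
    apply Finset.prod_congr rfl
    intro k _
    unfold r1 wq
    rw [show 0+m+k = m+k from by omega, show 2*m+0+2*k = 2*m+2*k from by omega,
      show 2*m+0+k = 2*m+k from by omega, show 2*k+0 = 2*k from by omega]
    field_simp
  have hicc : ∏ k ∈ range n, wq m k
      = ∏ j ∈ Finset.Icc 1 (n-1),
          ((j.factorial : ℚ) * ((2 * m + 2 * j).factorial : ℚ)) /
            (((2 * j).factorial : ℚ) * ((2 * m + j).factorial : ℚ)) := by
    have hw : ∀ j, wq m j = ((j.factorial : ℚ) * ((2 * m + 2 * j).factorial : ℚ)) /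
        (((2 * j).factorial : ℚ) * ((2 * m + j).factorial : ℚ)) := fun j => rfl
    cases n with
    | zero => simp
    | succ N =>
      have hins : range (N+1) = insert 0 (Finset.Icc 1 N) := by
        ext x; simp only [Finset.mem_range, Finset.mem_insert, Finset.mem_Icc]; omega
      rw [hins, Finset.prod_insert (by simp), Nat.succ_sub_one]
      have hw0 : wq m 0 = 1 := by
        unfold wq
        norm_num
        exact Nat.factorial_ne_zero _
      rw [hw0, one_mul]
      exact Finset.prod_congr rfl fun j _ => rfl
  have h2 : (Matrix.of fun i j : Fin m =>
        (catalan (n + (i : ℕ) + (j : ℕ)) : ℚ)).det = ∏ k ∈ range n, wq m k := by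
    have hH : (Matrix.of fun i j : Fin m => (catalan (n + (i : ℕ) + (j : ℕ)) : ℚ))
        = Matrix.of fun i j : Fin m => KQf 0 n (i:ℕ) (j:ℕ) := by
      ext i j
      simp only [Matrix.of_apply]
      rw [show KQf 0 n (i:ℕ) (j:ℕ) = KQ 0 (n+(i:ℕ)+(j:ℕ)) from rfl, ← catQ]
    rw [hH, claim2 m n 0, PI3 n m]
  exact ⟨h1.trans hicc, h1.trans (hicc.trans (hicc.symm.trans h2.symm))⟩

end Stmt12

theorem stmt_12 (n m : ℕ) :
    Matrix.det (Matrix.of fun i j : Fin n =>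
          (Nat.choose ((i : ℕ) + (j : ℕ) + m) (2 * (j : ℕ)) : ℚ))
        = ∏ j ∈ Finset.Icc 1 (n - 1),
            ((j.factorial : ℚ) * ((2 * m + 2 * j).factorial : ℚ)) /
              (((2 * j).factorial : ℚ) * ((2 * m + j).factorial : ℚ)) ∧
      Matrix.det (Matrix.of fun i j : Fin n =>
          (Nat.choose ((i : ℕ) + (j : ℕ) + m) (2 * (j : ℕ)) : ℚ))
        = Matrix.det (Matrix.of fun i j : Fin m =>
            (catalan (n + (i : ℕ) + (j : ℕ)) : ℚ)) := by
  exact Stmt12.final n m
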